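/- The operators P_{−z/M} ∘ P_{−u} ∘ T_{M/u} ∘ P_{z/M} and (1/(1−z/u)) · P_{−u} ∘ T_{M/u} are equal; consequently, equating coefficients of z^k u^r on both sides gives P_{−z/M} D_r P_{z/M}|_{z^k} = D_{k+r} for all k ≥ 0. -/

import Mathlib

/-!
Common setup for "A proof of the Theta Operator Conjecture" (Romero).

* `K = ℚ(q,t)` is realized as the fraction field of `ℚ[q,t]`.
* `Λ`, the ring of symmetric functions with coefficients in `ℚ(q,t)`, is realized as the
  polynomial ring on the power sums `p 1, p 2, …` (a presentation valid in characteristic 0).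
* The plethystic exponential `E[X] = ∑ hₙ[X] = exp (∑ p_k/k)` is encoded through the
  Newton-type recursion `n·Gₙ = ∑_{k=1}^{n} c_k G_{n-k}` for the coefficients of
  `exp (∑_{k ≥ 1} c_k z^k / k)`.
* Formal series in an auxiliary variable `z` (resp. a Laurent variable) with coefficients
  in `Λ` are elements of `PowerSeries Λ` (resp. `LaurentSeries Λ`), and operator identities
  involving generating functions are stated coefficientwise / as series identities,
  pointwise on `F : Λ`.
* The modified Macdonald basis `H̃_μ` (indexed by `YoungDiagram`) is axiomatized in the
  structure `MacdonaldBasis` via the Garsia–Haiman triangularity/normalization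
  characterization; all Macdonald eigenoperators (`Δ_f`, `∇`, `Π`, `Θ_k`, `Δ_v`) are then
  defined diagonally from it.
-/

noncomputable section

namespace ThetaOperators

open scoped Classical

/-- The base field `ℚ(q,t)`. -/
abbrev K : Type := FractionRing (MvPolynomial (Fin 2) ℚ)

/-- The parameter `q`. -/
def q : K := algebraMap (MvPolynomial (Fin 2) ℚ) K (MvPolynomial.X 0)

/-- The parameter `t`. -/
def t : K := algebraMap (MvPolynomial (Fin 2) ℚ) K (MvPolynomial.X 1)

/-- `M = (1-q)(1-t)`. -/
def M : K := (1 - q) * (1 - t)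

/-- The ring of symmetric functions with coefficients in `ℚ(q,t)`, presented as the
polynomial ring on the power sums. -/
abbrev Λ : Type := MvPolynomial ℕ+ K

/-- The power sum symmetric function `p_k`. -/
def p (k : ℕ+) : Λ := MvPolynomial.X k

/-- `genF c n` is the coefficient of `z^n` in `exp (∑_{k ≥ 1} c_k z^k / k)`,
via the Newton-type recursion `n·Gₙ = ∑_{k=1}^{n} c_k G_{n-k}`. -/
def genF (c : ℕ+ → Λ) : ℕ → Λ
  | 0 => 1
  | n + 1 =>
      (((n : K) + 1)⁻¹) •
        ∑ k ∈ Finset.range (n + 1), c ⟨k + 1, Nat.succ_pos k⟩ * genF c (n - k)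
  termination_by n => n
  decreasing_by simp_wf <;> omega

/-- The complete homogeneous symmetric function `h_n`: coefficient of `z^n`
in `E[zX] = exp (∑ p_k z^k / k)`. -/
def h (n : ℕ) : Λ := genF p n

/-- The elementary symmetric function `e_n`: `E[-zX] = ∑ (-z)^n e_n`. -/
def e (n : ℕ) : Λ := (-1) ^ n * genF (fun k => -p k) n

/-- Scalar version of `genF`: coefficient of `z^n` in `exp (∑_{k≥1} c_k z^k / k)` over `K`. -/
def genK (c : ℕ+ → K) : ℕ → K
  | 0 => 1
  | n + 1 =>
      ((n : K) + 1)⁻¹ *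
        ∑ k ∈ Finset.range (n + 1), c ⟨k + 1, Nat.succ_pos k⟩ * genK c (n - k)
  termination_by n => n
  decreasing_by simp_wf <;> omega

/-- `Eser ζ n` is the coefficient of `z^n` in `E[zWX]`, where `W` is the alphabet with
power sums `p_k[W] = ζ k`.  E.g. `Eser (fun _ => -1) n = (-1)^n eₙ[X]`, so that
`∑ z^n · Eser (fun _ => -1) n = E[-zX]`. -/
def Eser (ζ : ℕ+ → K) (n : ℕ) : Λ := genF (fun k => MvPolynomial.C (ζ k) * p k) n

/-- `p_k[M] = (1-q^k)(1-t^k)`. -/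
def Mk (k : ℕ+) : K := (1 - q ^ (k : ℕ)) * (1 - t ^ (k : ℕ))

/-- `p_k[X/M]`-twist: `1/((1-q^k)(1-t^k))`.  Thus `Eser invM n = h_n[X/M]` and
`∑ z^n Eser invM n = E[zX/M]`; similarly `∑ z^n Eser (fun j => -invM j) n = E[-zX/M]`. -/
def invM (k : ℕ+) : K := (Mk k)⁻¹

/-- Plethystic translation `T_Y : F[X] ↦ F[X+Y]` by an alphabet `Y` with power sums
`p_k[Y] = a k ∈ K`. -/
def Ttr (a : ℕ+ → K) : Λ →ₐ[K] Λ :=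
  MvPolynomial.aeval fun k => p k + MvPolynomial.C (a k)

/-- `f ↦ f* = f[X/M]`. -/
def star : Λ →ₐ[K] Λ :=
  MvPolynomial.aeval fun k => MvPolynomial.C (invM k) * p k

/-- `F ↦ F[X + M/z]`, as a Laurent series in `z` with coefficients in `Λ`
(the translation `T_{M/z}`). -/
def TMz : Λ →ₐ[K] LaurentSeries Λ :=
  MvPolynomial.aeval fun k =>
    HahnSeries.C (p k) + Mk k • HahnSeries.single (-((k : ℕ) : ℤ)) (1 : Λ)

/-- `E[-zX]` as a Laurent series in `z`. -/
def EnegL : LaurentSeries Λ :=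
  HahnSeries.ofPowerSeries ℤ Λ (PowerSeries.mk (Eser fun _ => -1))

/-- The Garsia–Haiman–Tesler operator `D_k`:
`D_k F = (F[X + M/z] · E[-zX]) |_{z^k}`. -/
def D (k : ℤ) (F : Λ) : Λ := ((TMz F) * EnegL).coeff k

/-- `p_k[B_μ] = ∑_{(i,j) ∈ μ} q^{k i'} t^{k j'}` where the cell `c` of the Young diagram
has (0-based) column index `c.2` (the `q`-exponent) and row index `c.1` (the `t`-exponent). -/
def Bexp (μ : YoungDiagram) (k : ℕ+) : K :=
  ∑ c ∈ μ.cells, q ^ ((k : ℕ) * c.2) * t ^ ((k : ℕ) * c.1)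

/-- `n(μ) = ∑ᵢ (i-1) μᵢ`: the sum of the (0-based) row indices of the cells. -/
def nstat (μ : YoungDiagram) : ℕ := ∑ c ∈ μ.cells, c.1

/-- `n(μ') = ∑ᵢ (i-1) μᵢ'`: the sum of the (0-based) column indices of the cells. -/
def nstat' (μ : YoungDiagram) : ℕ := ∑ c ∈ μ.cells, c.2

/-- `h_n` for integer index (zero for negative `n`). -/
def hZ (n : ℤ) : Λ := if n < 0 then 0 else h n.toNat

/-- The Schur function, via the Jacobi–Trudi determinant. -/
def schur (μ : YoungDiagram) : Λ :=
  Matrix.det (Matrix.of fun i j : Fin (μ.colLen 0) =>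
    hZ ((μ.rowLen i : ℤ) + (j : ℤ) - (i : ℤ)))

/-- Dominance order: `lam ⊵ μ`. -/
def Dominates (lam μ : YoungDiagram) : Prop :=
  lam.card = μ.card ∧
    ∀ m : ℕ, ∑ i ∈ Finset.range m, μ.rowLen i ≤ ∑ i ∈ Finset.range m, lam.rowLen i

/-- The span of the Schur functions `s_lam` with `lam ⊵ μ`. -/
def domSpan (μ : YoungDiagram) : Submodule K Λ :=
  Submodule.span K {f | ∃ lam, Dominates lam μ ∧ f = schur lam}

/-- Plethystic twist `F[X] ↦ F[AX]` for an alphabet `A` with `p_k[A] = a k`. -/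
def twist (a : ℕ+ → K) : Λ →ₐ[K] Λ :=
  MvPolynomial.aeval fun k => MvPolynomial.C (a k) * p k

/-- Evaluation at the single-letter alphabet `X = 1` (i.e. `p_k ↦ 1`); for homogeneous `F`
of degree `n` this is the Hall scalar product `⟨F, s_(n)⟩`. -/
def ev1 : Λ →ₐ[K] K := MvPolynomial.aeval fun _ => 1

/-- The modified Macdonald basis `H̃_μ` of `Λ`, axiomatized by the Garsia–Haiman
characterization: `H̃_μ[X(q-1)] ∈ span{s_lam : lam ⊵ μ}`,
`H̃_μ[X(t-1)] ∈ span{s_lam : lam ⊵ μ'}`, and `⟨H̃_μ, s_(n)⟩ = 1`. -/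
structure MacdonaldBasis where
  H : Module.Basis YoungDiagram K Λ
  triangular_q : ∀ μ, twist (fun k => q ^ (k : ℕ) - 1) (H μ) ∈ domSpan μ
  triangular_t : ∀ μ, twist (fun k => t ^ (k : ℕ) - 1) (H μ) ∈ domSpan μ.transpose
  normalized : ∀ μ, ev1 (H μ) = 1

/-- The diagonal operator on `Λ` acting on the Macdonald basis with eigenvalues `ev`. -/
def diag (B : MacdonaldBasis) (ev : YoungDiagram → K) (F : Λ) : Λ :=
  (B.H.repr F).sum fun μ c => (ev μ * c) • B.H μ

/-- The Delta eigenoperator `Δ_f : H̃_μ ↦ f[B_μ] H̃_μ`. -/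
def Delta (B : MacdonaldBasis) (f : Λ) : Λ → Λ :=
  diag B fun μ => MvPolynomial.aeval (Bexp μ) f

/-- `∇ : H̃_μ ↦ (-1)^{|μ|} q^{n(μ')} t^{n(μ)} H̃_μ`. -/
def nabla (B : MacdonaldBasis) : Λ → Λ :=
  diag B fun μ => (-1) ^ μ.card * q ^ nstat' μ * t ^ nstat μ

/-- The inverse of `∇`. -/
def nablaInv (B : MacdonaldBasis) : Λ → Λ :=
  diag B fun μ => ((-1) ^ μ.card * q ^ nstat' μ * t ^ nstat μ)⁻¹

/-- `Π_μ = ∏_{(i,j) ∈ μ/(1)} (1 - q^i t^j)` (product over all cells but the corner). -/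
def PiEv (μ : YoungDiagram) : K :=
  ∏ c ∈ μ.cells.erase (0, 0), (1 - q ^ c.2 * t ^ c.1)

/-- The operator `Π : H̃_μ ↦ Π_μ H̃_μ`. -/
def PiOp (B : MacdonaldBasis) : Λ → Λ := diag B PiEv

/-- The inverse of `Π`. -/
def PiInv (B : MacdonaldBasis) : Λ → Λ := diag B fun μ => (PiEv μ)⁻¹

/-- The Theta operator `Θ_k = Π ∘ (multiplication by e_k[X/M]) ∘ Π⁻¹`. -/
def Theta (B : MacdonaldBasis) (k : ℕ) (F : Λ) : Λ :=
  PiOp B (star (e k) * PiInv B F)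

/-- `Δ_v = ∑_{n ≥ 0} (-v)^n Δ_{e_n}`, the diagonal operator with eigenvalues
`∏_{(i,j) ∈ μ} (1 - v q^i t^j)`. -/
def DeltaV (B : MacdonaldBasis) (v : K) : Λ → Λ :=
  diag B fun μ => ∏ c ∈ μ.cells, (1 - v * q ^ c.2 * t ^ c.1)

/-- The inverse of `Δ_v`. -/
def DeltaVInv (B : MacdonaldBasis) (v : K) : Λ → Λ :=
  diag B fun μ => (∏ c ∈ μ.cells, (1 - v * q ^ c.2 * t ^ c.1))⁻¹

/-- `v ∈ ℚ(q,t)` is a monomial `q^a t^b`. -/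
def IsMonomial (v : K) : Prop := ∃ a b : ℤ, v = q ^ a * t ^ b

/-- `∏_{(i,j) ∈ μ} (1 - q^i t^j u)` as a polynomial in `u`. -/
def cellPoly (μ : YoungDiagram) : Polynomial K :=
  ∏ c ∈ μ.cells, (1 - Polynomial.C (q ^ c.2 * t ^ c.1) * Polynomial.X)

/-! ### Auxiliary machinery for the proof -/

set_option maxHeartbeats 1000000 in
set_option synthInstance.maxHeartbeats 1000000 in
lemma aux_dummy : True := trivial

section GenAux

set_option synthInstance.maxHeartbeats 1000000

variable {R : Type} [CommRing R] [Algebra K R]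

/-- Generalized `genF` over an arbitrary commutative `K`-algebra. -/
def gen (c : ℕ+ → R) : ℕ → R
  | 0 => 1
  | n + 1 =>
      algebraMap K R (((n : K) + 1)⁻¹) *
        ∑ k ∈ Finset.range (n + 1), c ⟨k + 1, Nat.succ_pos k⟩ * gen c (n - k)
  termination_by n => n
  decreasing_by simp_wf <;> omega

lemma gen_zero (c : ℕ+ → R) : gen c 0 = 1 := by rw [gen]

lemma gen_succ (c : ℕ+ → R) (n : ℕ) :
    gen c (n + 1) =
      algebraMap K R (((n : K) + 1)⁻¹) *
        ∑ k ∈ Finset.range (n + 1), c ⟨k + 1, Nat.succ_pos k⟩ * gen c (n - k) := by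
  rw [gen]

lemma genF_eq_gen (c : ℕ+ → Λ) : ∀ n, genF c n = gen c n := by
  intro n
  induction n using Nat.strong_induction_on with
  | _ n ih =>
    match n with
    | 0 => rw [genF, gen]
    | Nat.succ m =>
      rw [genF, gen_succ, MvPolynomial.smul_eq_C_mul, MvPolynomial.algebraMap_eq]
      congr 1
      refine Finset.sum_congr rfl fun k hk => ?_
      rw [ih (m - k) (by omega)]

lemma cast_succ_ne_zero (n : ℕ) : ((n : K) + 1) ≠ 0 := Nat.cast_add_one_ne_zero n

/-- The series `∑_{k ≥ 1} c_k z^k`. -/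
def cser (c : ℕ+ → R) : PowerSeries R :=
  PowerSeries.mk fun k => if h : 0 < k then c ⟨k, h⟩ else 0

lemma coeff_cser_mul (c : ℕ+ → R) (F : ℕ → R) (n : ℕ) :
    PowerSeries.coeff (n + 1) (cser c * PowerSeries.mk F)
      = ∑ k ∈ Finset.range (n + 1), c ⟨k + 1, Nat.succ_pos k⟩ * F (n - k) := by
  rw [PowerSeries.coeff_mul, Finset.Nat.sum_antidiagonal_eq_sum_range_succ_mk,
    Finset.sum_range_succ']
  simp [cser]

lemma gen_rec_series (c : ℕ+ → R) (n : ℕ) :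
    algebraMap K R (n : K) * gen c n
      = PowerSeries.coeff n (cser c * PowerSeries.mk (gen c)) := by
  cases n with
  | zero => simp [PowerSeries.coeff_mul, cser]
  | succ m =>
    rw [coeff_cser_mul, gen_succ, ← mul_assoc, ← map_mul]
    rw [show ((m + 1 : ℕ) : K) * ((m : K) + 1)⁻¹ = 1 by
      push_cast
      exact mul_inv_cancel₀ (cast_succ_ne_zero m)]
    rw [map_one, one_mul]

lemma cser_mul_mk_gen (c : ℕ+ → R) :
    cser c * PowerSeries.mk (gen c)
      = PowerSeries.mk fun n => algebraMap K R (n : K) * gen c n := by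
  ext n
  rw [PowerSeries.coeff_mk, ← gen_rec_series]

lemma eq_gen_of_rec (c : ℕ+ → R) (F : ℕ → R) (h0 : F 0 = 1)
    (hrec : ∀ n : ℕ, algebraMap K R (n : K) * F n
      = PowerSeries.coeff n (cser c * PowerSeries.mk F)) :
    ∀ n, F n = gen c n := by
  intro n
  induction n using Nat.strong_induction_on with
  | _ n ih =>
    match n with
    | 0 => rw [h0, gen_zero]
    | Nat.succ m =>
      have h := hrec (m + 1)
      rw [coeff_cser_mul] at h
      rw [Finset.sum_congr rfl (fun k hk => by
        rw [ih (m - k) (by omega)] :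
        ∀ k ∈ Finset.range (m + 1), c ⟨k + 1, Nat.succ_pos k⟩ * F (m - k)
          = c ⟨k + 1, Nat.succ_pos k⟩ * gen c (m - k))] at h
      rw [gen_succ, ← h, ← mul_assoc, ← map_mul]
      rw [show ((m : K) + 1)⁻¹ * ((m + 1 : ℕ) : K) = 1 by
        push_cast
        exact inv_mul_cancel₀ (cast_succ_ne_zero m)]
      rw [map_one, one_mul]

lemma mk_gen_mul (a b : ℕ+ → R) :
    PowerSeries.mk (gen a) * PowerSeries.mk (gen b)
      = PowerSeries.mk (gen fun k => a k + b k) := by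
  have hc : cser (R := R) (fun k => a k + b k) = cser a + cser b := by
    ext n
    simp only [cser, PowerSeries.coeff_mk, map_add]
    split <;> simp
  set P := PowerSeries.mk (gen a) * PowerSeries.mk (gen b) with hP
  have hmk : PowerSeries.mk (fun n => PowerSeries.coeff n P) = P := by
    ext n; rw [PowerSeries.coeff_mk]
  have key : ∀ n : ℕ, algebraMap K R (n : K) * PowerSeries.coeff n P
      = PowerSeries.coeff n (cser (fun k => a k + b k) * P) := by
    intro n
    rw [hc, add_mul, map_add]
    have e1 : cser a * P = (cser a * PowerSeries.mk (gen a)) * PowerSeries.mk (gen b) := by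
      rw [hP]; ring
    have e2 : cser b * P = PowerSeries.mk (gen a) * (cser b * PowerSeries.mk (gen b)) := by
      rw [hP]; ring
    rw [e1, e2, cser_mul_mk_gen, cser_mul_mk_gen, hP, PowerSeries.coeff_mul,
      PowerSeries.coeff_mul, PowerSeries.coeff_mul, Finset.mul_sum,
      ← Finset.sum_add_distrib]
    refine Finset.sum_congr rfl fun p hp => ?_
    rw [Finset.HasAntidiagonal.mem_antidiagonal] at hp
    simp only [PowerSeries.coeff_mk]
    rw [← hp]
    push_cast [map_add]
    ring
  have := eq_gen_of_rec (fun k => a k + b k) (fun n => PowerSeries.coeff n P)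
    (by simp [hP, PowerSeries.coeff_mul, gen_zero]) (by simpa [hmk] using key)
  ext n
  rw [PowerSeries.coeff_mk, ← this n]

lemma map_gen {S : Type} [CommRing S] [Algebra K S] (φ : R →ₐ[K] S) (c : ℕ+ → R) :
    ∀ n, φ (gen c n) = gen (fun k => φ (c k)) n := by
  intro n
  induction n using Nat.strong_induction_on with
  | _ n ih =>
    match n with
    | 0 => rw [gen_zero, gen_zero, map_one]
    | Nat.succ m =>
      rw [gen_succ, map_mul, AlgHom.commutes, map_sum, gen_succ]
      congr 1
      refine Finset.sum_congr rfl fun k hk => ?_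
      rw [map_mul, ih (m - k) (by omega)]

lemma inv_succ_mul_sum_const (m : ℕ) (f : ℕ → R) (x : R)
    (hf : ∀ k ∈ Finset.range (m + 1), f k = x) :
    algebraMap K R (((m : K) + 1)⁻¹) * ∑ k ∈ Finset.range (m + 1), f k = x := by
  rw [Finset.sum_congr rfl hf, Finset.sum_const, Finset.card_range, nsmul_eq_mul]
  rw [show ((m + 1 : ℕ) : R) = algebraMap K R ((m + 1 : ℕ) : K) from
    (map_natCast (algebraMap K R) (m + 1)).symm]
  rw [← mul_assoc, ← map_mul]
  rw [show ((m : K) + 1)⁻¹ * ((m + 1 : ℕ) : K) = 1 by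
    push_cast
    exact inv_mul_cancel₀ (cast_succ_ne_zero m)]
  rw [map_one, one_mul]

end GenAux

section MainAux

set_option synthInstance.maxHeartbeats 1000000
set_option maxHeartbeats 1000000

/-- `HahnSeries.C : Λ → LaurentSeries Λ` as a `K`-algebra homomorphism. -/
def Cah : Λ →ₐ[K] LaurentSeries Λ :=
  { (HahnSeries.C : Λ →+* LaurentSeries Λ) with
    commutes' := fun r => by
      rw [HahnSeries.algebraMap_apply', PowerSeries.algebraMap_apply,
        HahnSeries.ofPowerSeries_C]
      rfl }

lemma Cah_apply (x : Λ) : Cah x = HahnSeries.C x := rfl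

lemma algebraMap_LS (r : K) :
    algebraMap K (LaurentSeries Λ) r = HahnSeries.C (MvPolynomial.C (σ := ℕ+) r) := by
  have hC : MvPolynomial.C (σ := ℕ+) r = algebraMap K Λ r := by
    rw [MvPolynomial.algebraMap_eq]
  rw [hC, ← Cah.commutes r, Cah_apply]

lemma TMz_C (r : K) :
    TMz (MvPolynomial.C (σ := ℕ+) r) = HahnSeries.C (MvPolynomial.C (σ := ℕ+) r) := by
  have hC : MvPolynomial.C (σ := ℕ+) r = algebraMap K Λ r := by
    rw [MvPolynomial.algebraMap_eq]
  rw [hC, AlgHom.commutes, algebraMap_LS, ← hC]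

lemma ksmul_eq (r : K) (x : LaurentSeries Λ) :
    r • x = HahnSeries.C (MvPolynomial.C (σ := ℕ+) r) * x := by
  ext a
  rw [HahnSeries.C_apply, HahnSeries.coeff_single_zero_mul, HahnSeries.coeff_smul,
    MvPolynomial.smul_eq_C_mul]

lemma gen_single :
    ∀ n, gen (R := LaurentSeries Λ)
        (fun k => HahnSeries.single (-((k : ℕ) : ℤ)) (1 : Λ)) n
      = HahnSeries.single (-(n : ℤ)) (1 : Λ) := by
  intro n
  induction n using Nat.strong_induction_on with
  | _ n ih =>
    match n with
    | 0 => rw [gen_zero]; simp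
    | Nat.succ m =>
      rw [gen_succ]
      refine inv_succ_mul_sum_const (R := LaurentSeries Λ) m _ _ ?_
      intro k hk
      rw [Finset.mem_range] at hk
      have he : (-(((k + 1 : ℕ)) : ℤ)) + -(((m - k : ℕ)) : ℤ) = -(((m + 1 : ℕ)) : ℤ) := by
        omega
      rw [ih (m - k) (by omega), HahnSeries.single_mul_single, one_mul]
      show HahnSeries.single ((-(((k + 1 : ℕ)) : ℤ)) + -(((m - k : ℕ)) : ℤ)) (1 : Λ)
        = HahnSeries.single (-(((m + 1 : ℕ)) : ℤ)) (1 : Λ)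
      rw [he]

lemma Mk_ne_zero (k : ℕ+) : Mk k ≠ 0 := by
  have key : ∀ i : Fin 2,
      (1 - algebraMap (MvPolynomial (Fin 2) ℚ) K (MvPolynomial.X i) ^ (k : ℕ)) ≠ 0 := by
    intro i h
    rw [sub_eq_zero] at h
    have h2 : algebraMap (MvPolynomial (Fin 2) ℚ) K ((MvPolynomial.X i) ^ (k : ℕ))
        = algebraMap (MvPolynomial (Fin 2) ℚ) K 1 := by
      rw [map_pow, map_one, ← h]
    have h3 := IsFractionRing.injective (MvPolynomial (Fin 2) ℚ) K h2
    have h4 := congrArg (MvPolynomial.eval fun _ => (0 : ℚ)) h3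
    simp [zero_pow k.pos.ne'] at h4
  have hq := key 0
  have ht := key 1
  rw [Mk]
  exact mul_ne_zero hq ht

lemma invM_mul_Mk (k : ℕ+) : invM k * Mk k = 1 :=
  inv_mul_cancel₀ (Mk_ne_zero k)

lemma Eser_eq_gen (ζ : ℕ+ → K) (n : ℕ) :
    Eser ζ n = gen (fun k => MvPolynomial.C (ζ k) * p k) n :=
  genF_eq_gen _ n

lemma core_identity :
    (PowerSeries.mk fun n =>
        (HahnSeries.C (Eser (fun j => -invM j) n) : LaurentSeries Λ))
      * (PowerSeries.mk fun n => TMz (Eser invM n))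
    = PowerSeries.mk fun k =>
        (HahnSeries.single (-(k : ℤ)) (1 : Λ) : LaurentSeries Λ) := by
  have h1 : (fun n => (HahnSeries.C (Eser (fun j => -invM j) n) : LaurentSeries Λ))
      = gen (fun k => Cah (MvPolynomial.C (-invM k) * p k)) := by
    funext n
    rw [← Cah_apply, Eser_eq_gen]
    exact map_gen (S := LaurentSeries Λ) Cah _ n
  have h2 : (fun n => TMz (Eser invM n))
      = gen (fun k => TMz (MvPolynomial.C (invM k) * p k)) := by
    funext n
    rw [Eser_eq_gen]
    exact map_gen (S := LaurentSeries Λ) TMz _ n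
  rw [h1, h2, mk_gen_mul]
  have h3 : (fun k => Cah (MvPolynomial.C (-invM k) * p k)
        + TMz (MvPolynomial.C (invM k) * p k))
      = fun k : ℕ+ => HahnSeries.single (-((k : ℕ) : ℤ)) (1 : Λ) := by
    funext k
    have hT : TMz (p k)
        = HahnSeries.C (p k) + Mk k • HahnSeries.single (-((k : ℕ) : ℤ)) (1 : Λ) := by
      rw [TMz, p, MvPolynomial.aeval_X]
      rfl
    have hc : (HahnSeries.C (MvPolynomial.C (invM k)) : LaurentSeries Λ) *
        HahnSeries.C (MvPolynomial.C (Mk k)) = 1 := by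
      rw [← map_mul, ← map_mul, invM_mul_Mk]
      simp
    rw [map_mul, map_mul, hT, TMz_C, ksmul_eq]
    simp only [Cah_apply]
    rw [map_neg, map_neg, mul_add, ← mul_assoc, hc, one_mul]
    ring
  rw [h3]
  exact congrArg PowerSeries.mk (funext gen_single)

end MainAux


set_option synthInstance.maxHeartbeats 1000000 in
set_option maxHeartbeats 1000000 in
lemma stmt1 (F : Λ) :
    (PowerSeries.mk fun n =>
        (HahnSeries.C (Eser (fun j => -invM j) n) : LaurentSeries Λ))
      * (PowerSeries.mk fun n => TMz (Eser invM n * F) * EnegL)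
    = (PowerSeries.mk fun k =>
        (HahnSeries.single (-(k : ℤ)) (1 : Λ) : LaurentSeries Λ))
        * PowerSeries.C (TMz F * EnegL) := by
  have hfac : (PowerSeries.mk fun n => TMz (Eser invM n * F) * EnegL)
      = (PowerSeries.mk fun n => TMz (Eser invM n))
        * PowerSeries.C (TMz F * EnegL) := by
    ext n
    rw [PowerSeries.coeff_mul_C, PowerSeries.coeff_mk, PowerSeries.coeff_mk, map_mul]
    ring
  rw [hfac, ← mul_assoc, core_identity]

set_option synthInstance.maxHeartbeats 1000000 in
set_option maxHeartbeats 1000000 in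
lemma stmt2 (k : ℕ) (r : ℤ) (F : Λ) :
    (PowerSeries.coeff k)
        ((PowerSeries.mk fun n => Eser (fun j => -invM j) n)
          * PowerSeries.mk fun n => D r (Eser invM n * F))
      = D ((k : ℤ) + r) F := by
  rw [PowerSeries.coeff_mul]
  have hterm : ∀ q ∈ Finset.HasAntidiagonal.antidiagonal k,
      (PowerSeries.coeff q.1) (PowerSeries.mk fun n => Eser (fun j => -invM j) n)
        * (PowerSeries.coeff q.2) (PowerSeries.mk fun n => D r (Eser invM n * F))
      = (HahnSeries.coeff.addMonoidHom (R := Λ) r)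
          ((HahnSeries.C (Eser (fun j => -invM j) q.1) : LaurentSeries Λ)
            * (TMz (Eser invM q.2 * F) * EnegL)) := by
    intro q hq
    simp only [PowerSeries.coeff_mk, D]
    show _ = ((HahnSeries.C (Eser (fun j => -invM j) q.1) : LaurentSeries Λ)
      * (TMz (Eser invM q.2 * F) * EnegL)).coeff r
    rw [HahnSeries.C_apply, HahnSeries.coeff_single_zero_mul]
  rw [Finset.sum_congr rfl hterm, ← map_sum]
  have hs : (∑ q ∈ Finset.HasAntidiagonal.antidiagonal k,
        (HahnSeries.C (Eser (fun j => -invM j) q.1) : LaurentSeries Λ)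
          * (TMz (Eser invM q.2 * F) * EnegL))
      = PowerSeries.coeff k
          ((PowerSeries.mk fun n =>
              (HahnSeries.C (Eser (fun j => -invM j) n) : LaurentSeries Λ))
            * (PowerSeries.mk fun n => TMz (Eser invM n * F) * EnegL)) := by
    rw [PowerSeries.coeff_mul]
    simp [PowerSeries.coeff_mk]
  rw [hs, stmt1 F, PowerSeries.coeff_mul_C, PowerSeries.coeff_mk]
  show ((HahnSeries.single (-(k:ℤ)) (1:Λ) : LaurentSeries Λ) * (TMz F * EnegL)).coeff r
    = D ((k : ℤ) + r) F
  have h := HahnSeries.coeff_single_mul_add (r := (1:Λ)) (x := TMz F * EnegL)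
    (a := r + (k : ℤ)) (b := -(k : ℤ))
  rw [show r + (k:ℤ) + -(k:ℤ) = r by ring] at h
  rw [h, one_mul, D, show r + (k:ℤ) = (k:ℤ) + r by ring]

/-- `P_{-z/M} ∘ P_{-u} ∘ T_{M/u} ∘ P_{z/M} = (1/(1-z/u)) · P_{-u} ∘ T_{M/u}`
(z-power series with coefficients Laurent series in `u`; `1/(1-z/u) = ∑ z^k u^{-k}`),
and consequently `P_{-z/M} D_r P_{z/M} |_{z^k} = D_{k+r}` for all `k ≥ 0`. -/
theorem P_PT_P_eq_geom :
    (∀ F : Λ,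
        (PowerSeries.mk fun n =>
            (HahnSeries.C (Eser (fun j => -invM j) n) : LaurentSeries Λ))
          * (PowerSeries.mk fun n => TMz (Eser invM n * F) * EnegL)
        = (PowerSeries.mk fun k =>
            (HahnSeries.single (-(k : ℤ)) (1 : Λ) : LaurentSeries Λ))
            * PowerSeries.C (TMz F * EnegL))
    ∧ (∀ (k : ℕ) (r : ℤ) (F : Λ),
        (PowerSeries.coeff k)
            ((PowerSeries.mk fun n => Eser (fun j => -invM j) n)
              * PowerSeries.mk fun n => D r (Eser invM n * F))
          = D ((k : ℤ) + r) F) := by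
  exact ⟨stmt1, stmt2⟩

end ThetaOperators
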